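/- (Lemma 1) Fix N ≥ 1 and, for each group i ∈ {1,…,N}, reals 0 ≤ a_{i1} ≤ a_{i2}, B > 0, and for j ∈ {1,2} reals R_{ij}, C_{ij}, P_{ij} ≥ 0. The total-energy objective V(d, t) = Σ_{i=1}^N B·t_i·(a_{i1}·2^((d_{i1}+d_{i2})/(B·t_i)) + (a_{i2} − a_{i1})·2^(d_{i2}/(B·t_i)) − a_{i2}) + Σ_{i=1}^N Σ_{j=1}^2 (R_{ij} − d_{ij})·C_{ij}·P_{ij} is a convex function of (d, t) ∈ ℝ^{2N} × ℝ^N on the convex set where t_i > 0 for all i. -/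

import Mathlib

lemma two_rpow_convexOn : ConvexOn ℝ Set.univ (fun u : ℝ => (2:ℝ) ^ u) := by
  have h : (fun u : ℝ => (2:ℝ) ^ u) = fun u : ℝ => Real.exp (u * Real.log 2) := by
    funext u
    rw [Real.rpow_def_of_pos (by norm_num), mul_comm]
  rw [h]
  have := convexOn_exp.comp_affineMap
    ((LinearMap.id : ℝ →ₗ[ℝ] ℝ).smulRight (Real.log 2)).toAffineMap
  simpa [Function.comp_def] using this

lemma combo_pos {t s a b : ℝ} (ht : 0 < t) (hs : 0 < s) (ha : 0 ≤ a) (hb : 0 ≤ b)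
    (hab : a + b = 1) : 0 < a * t + b * s := by
  rcases eq_or_lt_of_le ha with h | h
  · have hb1 : b = 1 := by linarith
    simp [← h, hb1, hs]
  · exact add_pos_of_pos_of_nonneg (mul_pos h ht) (mul_nonneg hb hs.le)

lemma key_persp (x y t s a b : ℝ) (ht : 0 < t) (hs : 0 < s) (ha : 0 ≤ a) (hb : 0 ≤ b)
    (hab : a + b = 1) :
    (a * t + b * s) * (2:ℝ) ^ ((a * x + b * y) / (a * t + b * s)) ≤
      a * (t * (2:ℝ) ^ (x / t)) + b * (s * (2:ℝ) ^ (y / s)) := by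
  have hT : 0 < a * t + b * s := combo_pos ht hs ha hb hab
  set T := a * t + b * s with hTdef
  have hw1 : 0 ≤ a * t / T := by positivity
  have hw2 : 0 ≤ b * s / T := by positivity
  have hwsum : a * t / T + b * s / T = 1 := by field_simp; exact hTdef.symm
  have hconv := two_rpow_convexOn.2 (Set.mem_univ (x / t)) (Set.mem_univ (y / s)) hw1 hw2 hwsum
  simp only [smul_eq_mul] at hconv
  have harg : a * t / T * (x / t) + b * s / T * (y / s) = (a * x + b * y) / T := by
    field_simp
  rw [harg] at hconv
  calc T * (2:ℝ) ^ ((a * x + b * y) / T)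
      ≤ T * (a * t / T * (2:ℝ) ^ (x / t) + b * s / T * (2:ℝ) ^ (y / s)) :=
        mul_le_mul_of_nonneg_left hconv hT.le
    _ = a * (t * (2:ℝ) ^ (x / t)) + b * (s * (2:ℝ) ^ (y / s)) := by
        field_simp

/-- Lemma 1: the total-energy objective
`V(d,t) = Σᵢ B·tᵢ·(a_{i1}·2^((d_{i1}+d_{i2})/(Btᵢ)) + (a_{i2}−a_{i1})·2^(d_{i2}/(Btᵢ)) − a_{i2})
        + Σᵢ Σⱼ (R_{ij} − d_{ij})·C_{ij}·P_{ij}`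
is convex on the convex set where all `tᵢ > 0`. -/
theorem stmt_4 (N : ℕ) (hN : 1 ≤ N) (B : ℝ) (hB : 0 < B)
    (a₁ a₂ : Fin N → ℝ) (ha₁ : ∀ i, 0 ≤ a₁ i) (h12 : ∀ i, a₁ i ≤ a₂ i)
    (R C P : Fin N → Fin 2 → ℝ) (hR : ∀ i j, 0 ≤ R i j)
    (hC : ∀ i j, 0 ≤ C i j) (hP : ∀ i j, 0 ≤ P i j) :
    ConvexOn ℝ {p : (Fin N → Fin 2 → ℝ) × (Fin N → ℝ) | ∀ i, 0 < p.2 i}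
      (fun p =>
        (∑ i, B * p.2 i * (a₁ i * (2 : ℝ) ^ ((p.1 i 0 + p.1 i 1) / (B * p.2 i))
          + (a₂ i - a₁ i) * (2 : ℝ) ^ (p.1 i 1 / (B * p.2 i)) - a₂ i))
        + ∑ i, ∑ j, (R i j - p.1 i j) * C i j * P i j) := by
  constructor
  · intro p hp q hq a b ha hb hab
    simp only [Set.mem_setOf_eq] at hp hq ⊢
    intro i
    simp only [Prod.fst_add, Prod.snd_add, Prod.smul_fst, Prod.smul_snd, Pi.add_apply,
      Pi.smul_apply, smul_eq_mul]
    exact combo_pos (hp i) (hq i) ha hb hab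
  · intro p hp q hq a b ha hb hab
    simp only [Set.mem_setOf_eq] at hp hq
    simp only [Prod.fst_add, Prod.snd_add, Prod.smul_fst, Prod.smul_snd, Pi.add_apply,
      Pi.smul_apply, smul_eq_mul]
    have hmain : ∀ i : Fin N,
        B * (a * p.2 i + b * q.2 i) *
          (a₁ i * (2:ℝ) ^ (((a * p.1 i 0 + b * q.1 i 0) + (a * p.1 i 1 + b * q.1 i 1)) /
              (B * (a * p.2 i + b * q.2 i)))
            + (a₂ i - a₁ i) * (2:ℝ) ^ ((a * p.1 i 1 + b * q.1 i 1) /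
              (B * (a * p.2 i + b * q.2 i))) - a₂ i)
        ≤ a * (B * p.2 i * (a₁ i * (2:ℝ) ^ ((p.1 i 0 + p.1 i 1) / (B * p.2 i))
            + (a₂ i - a₁ i) * (2:ℝ) ^ (p.1 i 1 / (B * p.2 i)) - a₂ i))
          + b * (B * q.2 i * (a₁ i * (2:ℝ) ^ ((q.1 i 0 + q.1 i 1) / (B * q.2 i))
            + (a₂ i - a₁ i) * (2:ℝ) ^ (q.1 i 1 / (B * q.2 i)) - a₂ i)) := by
      intro i
      have h1 := key_persp (p.1 i 0 + p.1 i 1) (q.1 i 0 + q.1 i 1) (B * p.2 i) (B * q.2 i)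
        a b (mul_pos hB (hp i)) (mul_pos hB (hq i)) ha hb hab
      have h2 := key_persp (p.1 i 1) (q.1 i 1) (B * p.2 i) (B * q.2 i)
        a b (mul_pos hB (hp i)) (mul_pos hB (hq i)) ha hb hab
      have e1 : a * (B * p.2 i) + b * (B * q.2 i) = B * (a * p.2 i + b * q.2 i) := by ring
      have e2 : a * (p.1 i 0 + p.1 i 1) + b * (q.1 i 0 + q.1 i 1)
          = (a * p.1 i 0 + b * q.1 i 0) + (a * p.1 i 1 + b * q.1 i 1) := by ring
      rw [e1, e2] at h1
      rw [e1] at h2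
      have h1' := mul_le_mul_of_nonneg_left h1 (ha₁ i)
      have h2' := mul_le_mul_of_nonneg_left h2 (sub_nonneg.2 (h12 i))
      nlinarith [h1', h2']
    have hlin : ∑ i, ∑ j, (R i j - (a * p.1 i j + b * q.1 i j)) * C i j * P i j
        = a * ∑ i, ∑ j, (R i j - p.1 i j) * C i j * P i j
          + b * ∑ i, ∑ j, (R i j - q.1 i j) * C i j * P i j := by
      simp only [Finset.mul_sum, ← Finset.sum_add_distrib]
      refine Finset.sum_congr rfl fun i _ => Finset.sum_congr rfl fun j _ => ?_
      have hb' : b = 1 - a := by linarith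
      subst hb'; ring
    have hS : (∑ i, B * (a * p.2 i + b * q.2 i) *
          (a₁ i * (2:ℝ) ^ (((a * p.1 i 0 + b * q.1 i 0) + (a * p.1 i 1 + b * q.1 i 1)) /
              (B * (a * p.2 i + b * q.2 i)))
            + (a₂ i - a₁ i) * (2:ℝ) ^ ((a * p.1 i 1 + b * q.1 i 1) /
              (B * (a * p.2 i + b * q.2 i))) - a₂ i))
        ≤ a * (∑ i, B * p.2 i * (a₁ i * (2:ℝ) ^ ((p.1 i 0 + p.1 i 1) / (B * p.2 i))
            + (a₂ i - a₁ i) * (2:ℝ) ^ (p.1 i 1 / (B * p.2 i)) - a₂ i))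
          + b * (∑ i, B * q.2 i * (a₁ i * (2:ℝ) ^ ((q.1 i 0 + q.1 i 1) / (B * q.2 i))
            + (a₂ i - a₁ i) * (2:ℝ) ^ (q.1 i 1 / (B * q.2 i)) - a₂ i)) := by
      rw [Finset.mul_sum, Finset.mul_sum, ← Finset.sum_add_distrib]
      exact Finset.sum_le_sum fun i _ => hmain i
    rw [hlin]
    linarith
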